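/- Let S = k[x₁,…,xₙ] over a perfect field of characteristic p, I ⊆ S an ideal, q = p^e, and J ⊆ S^q the ideal of all q-th powers of elements of I. Then there is an isomorphism of S-modules Hom_{S^q}(S/I, S^q/J) ≅ ((I^{[q]} :_S I)/I^{[q]})·φ, where φ is the S-generator of Hom_{S^q}(S,S^q) and I^{[q]} = JS is the ideal generated by q-th powers of elements of I. -/

import Mathlib

open MvPolynomial

/-- Scalar restriction: any module over a commutative ring `S` is a module over any subring
`sq ⊆ S`, via the inclusion `sq → S`.  This is used below to regard the `S`-modules `S/I` and
`(I^{[q]} :_S I)/I^{[q]}` as modules over the subring `S^q`. -/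
noncomputable def subringModule {S : Type*} [CommRing S] (sq : Subring S) (M : Type*)
    [AddCommGroup M] [Module S M] : Module ↥sq M :=
  Module.compHom M sq.subtype

set_option synthInstance.maxHeartbeats 1000000 in
set_option maxHeartbeats 4000000 in
/-- **Fedder's identification.** Let `S = k[x₁,…,xₙ]` over a perfect field of
characteristic `p`, `I ⊆ S` an ideal, `q = p^e`, and `J ⊆ S^q` the ideal of all `q`-th powers
of elements of `I`.  Then there is an isomorphism of `S`-modules
`Hom_{S^q}(S/I, S^q/J) ≅ ((I^{[q]} :_S I)/I^{[q]})·φ`, where `φ` is the `S`-generator of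
`Hom_{S^q}(S, S^q)` and `I^{[q]} = J·S` is the ideal of `S` generated by the `q`-th powers of
elements of `I`.  Concretely: there is an `S^q`-linear equivalence `eqv` from
`(I^{[q]} :_S I)/I^{[q]}` (realized as the image of `I^{[q]} :_S I` in `S/I^{[q]}`) onto
`Hom_{S^q}(S/I, S^q/J)` sending the class of `u` to the map induced by `t ↦ φ(u·t)`; it is
moreover `S`-linear for the `S`-module structure `(s·ψ)(t) = ψ(s·t)` on the Hom-module. -/
theorem stmt4 {k : Type*} [Field k] [PerfectField k] {p : ℕ} [Fact p.Prime] [CharP k p]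
    (n e : ℕ) (I : Ideal (MvPolynomial (Fin n) k))
    -- the subring `S^q ⊆ S`
    (sq : Subring (MvPolynomial (Fin n) k))
    (hsq : sq = RingHom.range (iterateFrobenius (MvPolynomial (Fin n) k) p e))
    -- `J ⊆ S^q`, the ideal of `q`-th powers of elements of `I`
    (J : Ideal ↥sq)
    (hJ : (J : Set ↥sq) = {y : ↥sq | ∃ f ∈ I, (y : MvPolynomial (Fin n) k) = f ^ p ^ e})
    -- `I^{[q]} = J·S`
    (Iq : Ideal (MvPolynomial (Fin n) k))
    (hIq : Iq = Ideal.span ((fun f => f ^ p ^ e) '' (I : Set (MvPolynomial (Fin n) k))))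
    -- `φ`, the `S`-generator of `Hom_{S^q}(S, S^q)` from Statement 3
    (b : Module.Basis {v : Fin n → ℕ // ∀ j, v j < p ^ e} ↥sq (MvPolynomial (Fin n) k))
    (hb : ∀ v : {v : Fin n → ℕ // ∀ j, v j < p ^ e},
      b v = ∏ j : Fin n, (X j : MvPolynomial (Fin n) k) ^ (v.1 j))
    (φ : MvPolynomial (Fin n) k →ₗ[↥sq] ↥sq)
    (hφ : ∀ v : {v : Fin n → ℕ // ∀ j, v j < p ^ e},
      φ (b v) = if ∀ j, v.1 j = p ^ e - 1 then 1 else 0)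
    -- the image `N` of `I^{[q]} :_S I` in `S/I^{[q]}`, i.e. `(I^{[q]} :_S I)/I^{[q]}`
    (N : Submodule (MvPolynomial (Fin n) k) (MvPolynomial (Fin n) k ⧸ Iq))
    (hN : N = Submodule.map Iq.mkQ (Iq.colon I)) :
    letI : Module ↥sq (MvPolynomial (Fin n) k ⧸ I) :=
      subringModule sq (MvPolynomial (Fin n) k ⧸ I)
    letI : Module ↥sq ↥N := subringModule sq ↥N
    ∃ eqv : ↥N ≃ₗ[↥sq] ((MvPolynomial (Fin n) k ⧸ I) →ₗ[↥sq] (↥sq ⧸ J)),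
      -- the isomorphism is "multiplication by `φ`": the class of `u` goes to `t ↦ φ(u·t)`
      (∀ u : MvPolynomial (Fin n) k, u ∈ Iq.colon I → ∀ w : ↥N,
        (w : MvPolynomial (Fin n) k ⧸ Iq) = Submodule.Quotient.mk u →
        ∀ t : MvPolynomial (Fin n) k,
          eqv w (Ideal.Quotient.mk I t) = Ideal.Quotient.mk J (φ (u * t))) ∧
      -- `S`-linearity for the module structure `(s·ψ)(t) = ψ(s·t)` on the Hom side
      (∀ (s : MvPolynomial (Fin n) k) (w : ↥N) (t : MvPolynomial (Fin n) k),
        eqv (s • w) (Ideal.Quotient.mk I t) = eqv w (Ideal.Quotient.mk I (s * t))) := by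
  letI i1 : Module ↥sq (MvPolynomial (Fin n) k ⧸ I) :=
    subringModule sq (MvPolynomial (Fin n) k ⧸ I)
  letI i2 : Module ↥sq ↥N := subringModule sq ↥N
  have hq : 0 < p ^ e := pow_pos (Fact.out (p := p.Prime)).pos e
  -- smul facts
  have hsm1 : ∀ (c : ↥sq) (x : MvPolynomial (Fin n) k), c • x = (c : MvPolynomial (Fin n) k) * x :=
    fun _ _ => rfl
  have hsm2 : ∀ (c : ↥sq) (x : MvPolynomial (Fin n) k ⧸ I),
      c • x = (c : MvPolynomial (Fin n) k) • x := fun _ _ => rfl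
  have hsm3 : ∀ (c : ↥sq) (x : ↥N), c • x = (c : MvPolynomial (Fin n) k) • x := fun _ _ => rfl
  -- q-th powers are in sq
  have hmemq : ∀ f : MvPolynomial (Fin n) k, f ^ p ^ e ∈ sq := by
    intro f
    rw [hsq]
    exact ⟨f, iterateFrobenius_def p e f⟩
  -- J membership characterization
  have hJ' : ∀ c : ↥sq, c ∈ J ↔ ∃ f ∈ I, (c : MvPolynomial (Fin n) k) = f ^ p ^ e := by
    intro c
    constructor
    · intro hc
      have : c ∈ (J : Set ↥sq) := hc
      rwa [hJ] at this
    · intro hc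
      have : c ∈ (J : Set ↥sq) := by rw [hJ]; exact hc
      exact this
  -- φ of a monomial with all exponents q-1
  have hφ1 : ∀ a : Fin n → ℕ, (∀ j, a j = p ^ e - 1) →
      φ (∏ j, (X j : MvPolynomial (Fin n) k) ^ a j) = 1 := by
    intro a ha
    have hlt : ∀ j, a j < p ^ e := fun j => by have := ha j; omega
    have h := hφ ⟨a, hlt⟩
    rw [hb ⟨a, hlt⟩] at h
    rw [h, if_pos ha]
  -- φ of a general monomial: zero when some exponent is ≢ q-1 mod q
  have hφ0 : ∀ a : Fin n → ℕ, (∃ j, a j % p ^ e ≠ p ^ e - 1) →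
      φ (∏ j, (X j : MvPolynomial (Fin n) k) ^ a j) = 0 := by
    intro a ha
    have hmem : (∏ j, (X j : MvPolynomial (Fin n) k) ^ (p ^ e * (a j / p ^ e))) ∈ sq := by
      have : (∏ j, (X j : MvPolynomial (Fin n) k) ^ (p ^ e * (a j / p ^ e)))
          = (∏ j, (X j : MvPolynomial (Fin n) k) ^ (a j / p ^ e)) ^ p ^ e := by
        rw [← Finset.prod_pow]
        exact Finset.prod_congr rfl fun j _ => by rw [← pow_mul, mul_comm]
      rw [this]
      exact hmemq _
    have hlt : ∀ j, a j % p ^ e < p ^ e := fun j => Nat.mod_lt _ hq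
    have hsplit : (∏ j, (X j : MvPolynomial (Fin n) k) ^ a j)
        = (⟨_, hmem⟩ : ↥sq) • (b ⟨fun j => a j % p ^ e, hlt⟩ : MvPolynomial (Fin n) k) := by
      rw [hb, hsm1, ← Finset.prod_mul_distrib]
      exact Finset.prod_congr rfl fun j _ => by
        rw [← pow_add, Nat.div_add_mod (a j) (p ^ e)]
    rw [hsplit, map_smul, hφ, if_neg, smul_zero]
    push_neg
    obtain ⟨j, hj⟩ := ha
    exact ⟨j, hj⟩
  -- the complement involution
  set σ : {v : Fin n → ℕ // ∀ j, v j < p ^ e} → {v : Fin n → ℕ // ∀ j, v j < p ^ e} :=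
    fun v => ⟨fun j => p ^ e - 1 - v.1 j,
      fun j => by show p ^ e - 1 - v.1 j < p ^ e; omega⟩ with hσ
  -- product of basis monomials
  have hbmul : ∀ w v : {v : Fin n → ℕ // ∀ j, v j < p ^ e},
      b w * b v = ∏ j, (X j : MvPolynomial (Fin n) k) ^ (w.1 j + v.1 j) := by
    intro w v
    rw [hb w, hb v, ← Finset.prod_mul_distrib]
    exact Finset.prod_congr rfl fun j _ => (pow_add _ _ _).symm
  -- the arithmetic fact
  have harith : ∀ w v : {v : Fin n → ℕ // ∀ j, v j < p ^ e}, w ≠ v →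
      ∃ j, (w.1 j + (p ^ e - 1 - v.1 j)) % p ^ e ≠ p ^ e - 1 := by
    intro w v hwv
    by_contra hcon
    push_neg at hcon
    apply hwv
    ext j : 2
    have h1 := w.2 j
    have h2 := v.2 j
    have h3 := hcon j
    rcases Nat.lt_or_ge (w.1 j + (p ^ e - 1 - v.1 j)) (p ^ e) with h | h
    · rw [Nat.mod_eq_of_lt h] at h3; omega
    · rw [Nat.mod_eq_sub_mod h, Nat.mod_eq_of_lt (by omega)] at h3; omega
  -- δ-orthogonality
  have hdelta : ∀ w v : {v : Fin n → ℕ // ∀ j, v j < p ^ e},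
      φ (b w * b (σ v)) = if w = v then 1 else 0 := by
    intro w v
    rw [hbmul]
    by_cases hwv : w = v
    · rw [if_pos hwv, hφ1]
      intro j
      subst hwv
      have := w.2 j
      simp only [hσ]
      omega
    · rw [if_neg hwv]
      exact hφ0 _ (harith w v hwv)
  -- multiplication as an sq-linear map
  have mulBy : ∀ a : MvPolynomial (Fin n) k,
      ∃ L : MvPolynomial (Fin n) k →ₗ[↥sq] MvPolynomial (Fin n) k,
        ∀ t, L t = t * a := by
    intro a
    exact ⟨{ toFun := fun t => t * a
             map_add' := fun x y => add_mul x y a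
             map_smul' := fun c x => by simp only [hsm1, RingHom.id_apply]; ring },
           fun t => rfl⟩
  -- coordinates via φ
  have hrepr : ∀ (s : MvPolynomial (Fin n) k) (v : {v : Fin n → ℕ // ∀ j, v j < p ^ e}),
      b.repr s v = φ (s * b (σ v)) := by
    intro s v
    obtain ⟨L, hL⟩ := mulBy (b (σ v))
    have : (Finsupp.lapply v).comp b.repr.toLinearMap = φ.comp L := by
      apply b.ext
      intro w
      simp only [LinearMap.comp_apply, LinearEquiv.coe_coe, Finsupp.lapply_apply, hL]
      rw [b.repr_self, Finsupp.single_apply, hdelta]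
    have h2 := LinearMap.congr_fun this s
    simpa only [LinearMap.comp_apply, Finsupp.lapply_apply, hL, LinearEquiv.coe_coe] using h2
  -- φ(t * Iq) ⊆ J
  have hIqJ : ∀ s ∈ Iq, ∀ t : MvPolynomial (Fin n) k, φ (t * s) ∈ J := by
    intro s hs
    rw [hIq] at hs
    refine Submodule.span_induction ?_ ?_ ?_ ?_ hs
    · rintro x ⟨f, hf, rfl⟩ t
      have h1 : t * f ^ p ^ e = (⟨f ^ p ^ e, hmemq f⟩ : ↥sq) • t := by rw [hsm1]; ring
      rw [h1, map_smul, smul_eq_mul]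
      exact Ideal.mul_mem_right _ _ ((hJ' _).mpr ⟨f, hf, rfl⟩)
    · intro t; simp
    · intro x y _ _ ihx ihy t
      rw [mul_add, map_add]
      exact add_mem (ihx t) (ihy t)
    · intro a x _ ih t
      rw [smul_eq_mul, ← mul_assoc]
      exact ih (t * a)
  -- membership in Iq via coordinates
  have hIq_iff : ∀ s : MvPolynomial (Fin n) k,
      s ∈ Iq ↔ ∀ v : {v : Fin n → ℕ // ∀ j, v j < p ^ e}, b.repr s v ∈ J := by
    intro s
    constructor
    · intro hs v
      rw [hrepr, mul_comm]
      exact hIqJ s hs (b (σ v))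
    · intro hs
      have h := b.linearCombination_repr s
      rw [← h, Finsupp.linearCombination_apply, Finsupp.sum]
      refine Submodule.sum_mem Iq ?_
      intro v _
      obtain ⟨f, hf, hfe⟩ := (hJ' _).mp (hs v)
      rw [hsm1, hfe]
      refine Ideal.mul_mem_right _ _ ?_
      rw [hIq]
      exact Ideal.subset_span ⟨f, hf, rfl⟩
  -- mk as lemmas
  have hmkI : ∀ x : MvPolynomial (Fin n) k,
      Ideal.Quotient.mk I x = Submodule.Quotient.mk x := fun _ => rfl
  have hmkJs : ∀ (c x : ↥sq), Ideal.Quotient.mk J (c * x) = c • Ideal.Quotient.mk J x := by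
    intro c x
    show Submodule.Quotient.mk (c * x) = c • (Submodule.Quotient.mk x : ↥sq ⧸ J)
    rw [← smul_eq_mul, Submodule.Quotient.mk_smul]
  -- difference lemma
  have hker : ∀ u u' : MvPolynomial (Fin n) k,
      (Submodule.Quotient.mk u : MvPolynomial (Fin n) k ⧸ Iq) = Submodule.Quotient.mk u' →
      ∀ t, Ideal.Quotient.mk J (φ (u * t)) = Ideal.Quotient.mk J (φ (u' * t)) := by
    intro u u' h t
    rw [Ideal.Quotient.mk_eq_mk_iff_sub_mem]
    have hmem : u - u' ∈ Iq := (Submodule.Quotient.eq Iq).mp h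
    have h2 : φ (u * t) - φ (u' * t) = φ (t * (u - u')) := by
      rw [← map_sub]; congr 1; ring
    rw [h2]
    exact hIqJ _ hmem t
  -- representatives of elements of N
  have hrepw : ∀ w : ↥N, ∃ u, u ∈ Iq.colon I ∧
      (Submodule.Quotient.mk u : MvPolynomial (Fin n) k ⧸ Iq) = (w : MvPolynomial (Fin n) k ⧸ Iq) := by
    intro w
    have hmem : (w : MvPolynomial (Fin n) k ⧸ Iq) ∈ Submodule.map Iq.mkQ (Iq.colon I) := by
      have h := w.2
      rwa [← hN]
    obtain ⟨u, hu1, hu2⟩ := hmem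
    exact ⟨u, hu1, hu2⟩
  choose rep hrep1 hrep2 using hrepw
  -- the lifted linear maps
  have hE0 : ∀ w : ↥N, ∃ L : (MvPolynomial (Fin n) k ⧸ I) →ₗ[↥sq] (↥sq ⧸ J),
      ∀ t, L (Ideal.Quotient.mk I t) = Ideal.Quotient.mk J (φ (rep w * t)) := by
    intro w
    have hsound : ∀ t t' : MvPolynomial (Fin n) k, Submodule.quotientRel I t t' →
        Ideal.Quotient.mk J (φ (rep w * t)) = Ideal.Quotient.mk J (φ (rep w * t')) := by
      intro t t' htt
      have hmem : t - t' ∈ I := by rwa [Submodule.quotientRel_def] at htt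
      rw [Ideal.Quotient.mk_eq_mk_iff_sub_mem]
      have h2 : φ (rep w * t) - φ (rep w * t') = φ (1 * (rep w * (t - t'))) := by
        rw [← map_sub]; congr 1; ring
      rw [h2]
      refine hIqJ _ ?_ 1
      have h3 := Submodule.mem_colon.mp (hrep1 w) (t - t') hmem
      rwa [smul_eq_mul] at h3
    refine ⟨{ toFun := fun x => Quotient.liftOn' x
                (fun t => Ideal.Quotient.mk J (φ (rep w * t))) hsound
              map_add' := ?_, map_smul' := ?_ }, fun t => rfl⟩
    · intro x y
      induction x using Quotient.inductionOn' with | h a =>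
      induction y using Quotient.inductionOn' with | h c =>
      show Ideal.Quotient.mk J (φ (rep w * (a + c)))
        = Ideal.Quotient.mk J (φ (rep w * a)) + Ideal.Quotient.mk J (φ (rep w * c))
      rw [mul_add, map_add, map_add]
    · intro c x
      induction x using Quotient.inductionOn' with | h a =>
      show Ideal.Quotient.mk J (φ (rep w * ((c : MvPolynomial (Fin n) k) • a)))
        = c • Ideal.Quotient.mk J (φ (rep w * a))
      have h3 : rep w * ((c : MvPolynomial (Fin n) k) • a) = c • (rep w * a) := by
        rw [smul_eq_mul, hsm1]; ring
      rw [h3, map_smul, smul_eq_mul, hmkJs]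
  choose E0 hE0spec using hE0
  -- the defining property
  have prop1 : ∀ u ∈ Iq.colon I, ∀ w : ↥N,
      (w : MvPolynomial (Fin n) k ⧸ Iq) = Submodule.Quotient.mk u →
      ∀ t, E0 w (Ideal.Quotient.mk I t) = Ideal.Quotient.mk J (φ (u * t)) := by
    intro u _ w hw t
    rw [hE0spec w t]
    apply hker
    rw [hrep2 w, hw]
  -- E is linear
  have hE : ∃ E : ↥N →ₗ[↥sq] ((MvPolynomial (Fin n) k ⧸ I) →ₗ[↥sq] (↥sq ⧸ J)),
      ∀ w, E w = E0 w := by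
    refine ⟨{ toFun := E0, map_add' := ?_, map_smul' := ?_ }, fun _ => rfl⟩
    · intro w w'
      apply LinearMap.ext
      intro x
      obtain ⟨t, rfl⟩ := Ideal.Quotient.mk_surjective x
      have h1 : ((w + w' : ↥N) : MvPolynomial (Fin n) k ⧸ Iq)
          = Submodule.Quotient.mk (rep w + rep w') := by
        rw [Submodule.coe_add, ← hrep2 w, ← hrep2 w', Submodule.Quotient.mk_add]
      rw [LinearMap.add_apply, prop1 _ (add_mem (hrep1 w) (hrep1 w')) (w + w') h1 t,
        prop1 _ (hrep1 w) w (hrep2 w).symm t, prop1 _ (hrep1 w') w' (hrep2 w').symm t,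
        add_mul, map_add, map_add]
    · intro c w
      apply LinearMap.ext
      intro x
      obtain ⟨t, rfl⟩ := Ideal.Quotient.mk_surjective x
      have hmemc : (c : MvPolynomial (Fin n) k) * rep w ∈ Iq.colon I :=
        Ideal.mul_mem_left _ _ (hrep1 w)
      have h1 : ((c • w : ↥N) : MvPolynomial (Fin n) k ⧸ Iq)
          = Submodule.Quotient.mk ((c : MvPolynomial (Fin n) k) * rep w) := by
        rw [hsm3, SetLike.val_smul, ← hrep2 w, ← Submodule.Quotient.mk_smul, smul_eq_mul]
      rw [RingHom.id_apply]
      refine (prop1 _ hmemc (c • w) h1 t).trans ?_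
      rw [LinearMap.smul_apply,
        prop1 _ (hrep1 w) w (hrep2 w).symm t]
      have h3 : (c : MvPolynomial (Fin n) k) * rep w * t = c • (rep w * t) := by
        rw [hsm1]; ring
      rw [h3, map_smul, smul_eq_mul, hmkJs]
  obtain ⟨E, hEval⟩ := hE
  -- injectivity
  have hinj : Function.Injective E := by
    apply (injective_iff_map_eq_zero E).mpr
    intro w hw0
    have h10 : rep w ∈ Iq := by
      rw [hIq_iff]
      intro v
      have h11 := prop1 (rep w) (hrep1 w) w (hrep2 w).symm (b (σ v))
      rw [← hEval w, hw0, LinearMap.zero_apply] at h11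
      rw [hrepr]
      exact Ideal.Quotient.eq_zero_iff_mem.mp h11.symm
    have h12 : (w : MvPolynomial (Fin n) k ⧸ Iq) = 0 := by
      rw [← hrep2 w, Submodule.Quotient.mk_eq_zero]
      exact h10
    exact Subtype.ext (by rw [h12]; rfl)
  -- fintype on the index set
  letI : Fintype {v : Fin n → ℕ // ∀ j, v j < p ^ e} :=
    Fintype.ofEquiv (Fin n → Fin (p ^ e))
      { toFun := fun f => ⟨fun j => (f j : ℕ), fun j => (f j).2⟩
        invFun := fun v j => ⟨v.1 j, v.2 j⟩
        left_inv := fun f => funext fun j => rfl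
        right_inv := fun v => Subtype.ext (funext fun j => rfl) }
  -- surjectivity
  have hsurj : Function.Surjective E := by
    intro ψ
    choose c hc using fun v => Ideal.Quotient.mk_surjective (ψ (Ideal.Quotient.mk I (b v)))
    set u : MvPolynomial (Fin n) k := ∑ v, ((c v : MvPolynomial (Fin n) k) * b (σ v)) with hu
    have hφu : ∀ w' : {v : Fin n → ℕ // ∀ j, v j < p ^ e}, φ (u * b w') = c w' := by
      intro w'
      calc φ (u * b w') = ∑ v, c v * (if w' = v then 1 else 0) := by
            rw [hu, Finset.sum_mul, map_sum]
            refine Finset.sum_congr rfl fun v _ => ?_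
            have h5 : ((c v : MvPolynomial (Fin n) k) * b (σ v)) * b w'
                = (c v) • (b w' * b (σ v)) := by rw [hsm1]; ring
            rw [h5, map_smul, hdelta, smul_eq_mul]
        _ = c w' := by simp [mul_ite, Finset.sum_ite_eq]
    -- mk I as an sq-linear map
    have mkIl : ∃ L : MvPolynomial (Fin n) k →ₗ[↥sq] (MvPolynomial (Fin n) k ⧸ I),
        ∀ t, L t = Ideal.Quotient.mk I t := by
      refine ⟨{ toFun := fun t => Ideal.Quotient.mk I t
                map_add' := fun x y => map_add _ x y
                map_smul' := fun cc t => ?_ }, fun t => rfl⟩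
      show Ideal.Quotient.mk I (cc • t) = cc • Ideal.Quotient.mk I t
      rw [hsm1, hsm2, hmkI, hmkI, ← smul_eq_mul, Submodule.Quotient.mk_smul]
    obtain ⟨Mk, hMk⟩ := mkIl
    obtain ⟨L, hL⟩ := mulBy u
    have hψ : ∀ t, Ideal.Quotient.mk J (φ (u * t)) = ψ (Ideal.Quotient.mk I t) := by
      have heq : (J.mkQ.comp φ).comp L = ψ.comp Mk := by
        apply b.ext
        intro v
        simp only [LinearMap.comp_apply, hL, hMk, Submodule.mkQ_apply]
        rw [mul_comm, hφu v]
        exact hc v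
      intro t
      have h6 := LinearMap.congr_fun heq t
      simp only [LinearMap.comp_apply, hL, hMk, Submodule.mkQ_apply] at h6
      rw [mul_comm] at h6
      exact h6
    have hucolon : u ∈ Iq.colon I := by
      rw [Submodule.mem_colon]
      intro f hf
      rw [smul_eq_mul, hIq_iff]
      intro v
      rw [hrepr]
      have h7 : u * f * b (σ v) = u * (f * b (σ v)) := mul_assoc _ _ _
      rw [h7]
      have h8 := hψ (f * b (σ v))
      have h9 : Ideal.Quotient.mk I (f * b (σ v)) = 0 :=
        Ideal.Quotient.eq_zero_iff_mem.mpr (I.mul_mem_right _ hf)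
      rw [h9, map_zero] at h8
      exact Ideal.Quotient.eq_zero_iff_mem.mp h8
    refine ⟨⟨Submodule.Quotient.mk u, ?_⟩, ?_⟩
    · rw [hN]
      exact ⟨u, hucolon, rfl⟩
    · apply LinearMap.ext
      intro x
      obtain ⟨t, rfl⟩ := Ideal.Quotient.mk_surjective x
      rw [hEval, prop1 u hucolon _ rfl t, hψ t]
  -- package
  refine ⟨LinearEquiv.ofBijective E ⟨hinj, hsurj⟩, ?_, ?_⟩
  · intro u hu w hw t
    show E w (Ideal.Quotient.mk I t) = _
    rw [hEval]
    exact prop1 u hu w hw t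
  · intro s w t
    have hmemc : s * rep w ∈ Iq.colon I := Ideal.mul_mem_left _ s (hrep1 w)
    have hval : ((s • w : ↥N) : MvPolynomial (Fin n) k ⧸ Iq)
        = Submodule.Quotient.mk (s * rep w) := by
      rw [SetLike.val_smul, ← hrep2 w, ← Submodule.Quotient.mk_smul, smul_eq_mul]
    show E (s • w) (Ideal.Quotient.mk I t) = E w (Ideal.Quotient.mk I (s * t))
    rw [hEval, hEval, prop1 _ hmemc (s • w) hval t,
      prop1 _ (hrep1 w) w (hrep2 w).symm (s * t)]
    congr 2
    ring
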